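/- Let H be a finite abelian group and let G = H ⋊ C₂ be the generalised dihedral group of H. Suppose S ⊆ G satisfies 1 ∉ S, S = S⁻¹, and every element of G is a product of at most two elements of S, and let d = |S|. Then |G| ≤ (d + 1)²/2. -/

import Mathlib

/-- The action of `ℤˣ = {±1}` on a commutative group `H` in which `-1` acts by the
inversion automorphism. -/
def invAut (H : Type*) [CommGroup H] : ℤˣ →* MulAut H where
  toFun u := if u = 1 then 1 else MulEquiv.inv H
  map_one' := by simp
  map_mul' a b := by
    rcases Int.units_eq_one_or a with ha | ha <;> rcases Int.units_eq_one_or b with hb | hb <;>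
      subst ha <;> subst hb <;> ext h <;> simp [MulEquiv.inv] <;> exact (inv_inv h).symm

/-- **Upper bound, order form.** Let `G = H ⋊ C₂` be the generalised dihedral group of a
finite abelian group `H`, and let `S ⊆ G` be inverse-closed, avoid the identity, and be
such that every element of `G` is a product of at most two elements of `S` (so that
`Cay(G,S)` has diameter at most 2 and degree `d = |S|`). Then `|G| ≤ (d+1)²/2`. -/
theorem generalised_dihedral_order_bound
    (H : Type*) [CommGroup H] [Fintype H]
    (S : Finset (H ⋊[invAut H] ℤˣ))
    (h1 : (1 : H ⋊[invAut H] ℤˣ) ∉ S)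
    (hinv : ∀ s ∈ S, s⁻¹ ∈ S)
    (hcov : ∀ g : H ⋊[invAut H] ℤˣ, g = 1 ∨ g ∈ S ∨ ∃ a ∈ S, ∃ b ∈ S, g = a * b)
    (d : ℕ) (hd : d = S.card) :
    (Nat.card (H ⋊[invAut H] ℤˣ) : ℝ) ≤ ((d : ℝ) + 1) ^ 2 / 2 := by
  classical
  let e : H × ℤˣ ≃ (H ⋊[invAut H] ℤˣ) :=
    { toFun := fun p => ⟨p.1, p.2⟩
      invFun := fun g => (g.left, g.right)
      left_inv := fun p => rfl
      right_inv := fun g => by cases g; rfl }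
  haveI : Fintype (H ⋊[invAut H] ℤˣ) := Fintype.ofEquiv _ e
  have hcardG : Nat.card (H ⋊[invAut H] ℤˣ) = 2 * Fintype.card H := by
    rw [Nat.card_eq_fintype_card, ← Fintype.card_congr e, Fintype.card_prod]
    simp [mul_comm]
  set A : Finset (H ⋊[invAut H] ℤˣ) := S.filter (fun s => s.right = 1) with hA
  set B : Finset (H ⋊[invAut H] ℤˣ) := S.filter (fun s => s.right = -1) with hB
  have hright : ∀ g : H ⋊[invAut H] ℤˣ, g.right = 1 ∨ g.right = -1 :=
    fun g => Int.units_eq_one_or g.right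
  have hab : A.card + B.card = d := by
    have hBeq : B = S.filter (fun s => ¬ s.right = 1) := by
      apply Finset.filter_congr
      intro x _
      rcases hright x with h | h <;> simp [h]
    rw [hd, hA, hBeq]
    exact Finset.card_filter_add_card_filter_not _
  have hcover : (Finset.univ.filter (fun g : H ⋊[invAut H] ℤˣ => g.right = -1)) ⊆
      ((insert (1 : H ⋊[invAut H] ℤˣ) A) ×ˢ B).image (fun p => p.1 * p.2) := by
    intro g hg
    simp only [Finset.mem_filter, Finset.mem_univ, true_and] at hg
    rcases hcov g with rfl | hgS | ⟨x, hx, y, hy, rfl⟩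
    · simp at hg
    · refine Finset.mem_image.2 ⟨(1, g), ?_, one_mul g⟩
      simp [Finset.mem_insert, Finset.mem_product, hB, Finset.mem_filter, hgS, hg]
    · have hxy : x.right * y.right = -1 := hg
      rcases hright x with hx1 | hx1 <;> rcases hright y with hy1 | hy1 <;>
        rw [hx1, hy1] at hxy <;> try simp at hxy
      · refine Finset.mem_image.2 ⟨(x, y), ?_, rfl⟩
        simp [Finset.mem_insert, Finset.mem_product, hA, hB, Finset.mem_filter, hx, hy, hx1, hy1]
      · refine Finset.mem_image.2 ⟨(y⁻¹, x), ?_, ?_⟩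
        · simp [Finset.mem_insert, Finset.mem_product, hA, hB, Finset.mem_filter,
            hinv y hy, hx, hx1, hy1]
        · show y⁻¹ * x = x * y
          apply SemidirectProduct.ext
          · rw [SemidirectProduct.mul_left, SemidirectProduct.mul_left, SemidirectProduct.inv_left,
              SemidirectProduct.inv_right]
            simp [invAut, hx1, hy1, MulEquiv.inv, mul_comm]
            rfl
          · simp [hx1, hy1]
  have hcardrefl :
      (Finset.univ.filter (fun g : H ⋊[invAut H] ℤˣ => g.right = -1)).card = Fintype.card H := by
    rw [← Fintype.card_coe]
    apply Fintype.card_congr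
    exact {
      toFun := fun g => (g : H ⋊[invAut H] ℤˣ).left
      invFun := fun h => ⟨⟨h, -1⟩, by simp⟩
      left_inv := fun g =>
        Subtype.ext (SemidirectProduct.ext rfl (((Finset.mem_filter.1 g.2).2).symm))
      right_inv := fun h => rfl }
  have hHle : Fintype.card H ≤ (A.card + 1) * B.card := by
    calc Fintype.card H
        = (Finset.univ.filter (fun g : H ⋊[invAut H] ℤˣ => g.right = -1)).card :=
          hcardrefl.symm
      _ ≤ (((insert (1 : H ⋊[invAut H] ℤˣ) A) ×ˢ B).image (fun p => p.1 * p.2)).card :=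
          Finset.card_le_card hcover
      _ ≤ ((insert (1 : H ⋊[invAut H] ℤˣ) A) ×ˢ B).card := Finset.card_image_le
      _ = (insert (1 : H ⋊[invAut H] ℤˣ) A).card * B.card := Finset.card_product _ _
      _ ≤ (A.card + 1) * B.card := Nat.mul_le_mul_right _ (Finset.card_insert_le _ _)
  have hr1 : (Nat.card (H ⋊[invAut H] ℤˣ) : ℝ) = 2 * (Fintype.card H : ℝ) := by
    exact_mod_cast hcardG
  have hr2 : (Fintype.card H : ℝ) ≤ ((A.card : ℝ) + 1) * B.card := by exact_mod_cast hHle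
  have hr3 : (A.card : ℝ) + B.card = d := by exact_mod_cast hab
  rw [hr1]
  nlinarith [sq_nonneg ((A.card : ℝ) + 1 - B.card)]
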